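/- Let σ be a length-minimal solution of the word equation U = V and let a ≠ b be letters such that ab occurs as a factor of σ(U). Then ab is either an explicit pair (some occurrence of ab in σ(U) arises entirely from explicit letters of U or V) or a crossing pair (some occurrence overlaps the boundary of a substituted variable). Equivalently: ab cannot have only implicit occurrences. -/

import Mathlib

variable {Γ 𝒳 : Type*}

def subApp (σ : 𝒳 → List Γ) (w : List (Γ ⊕ 𝒳)) : List Γ :=
  w.flatMap (Sum.elim (fun a => [a]) σ)

/-- The pattern `p` occurs in `s` at position `i`. -/
def occursAt (s p : List Γ) (i : ℕ) : Prop :=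
  i + p.length ≤ s.length ∧ (s.drop i).take p.length = p

/-- The occurrence of a factor of length `len` at position `i` of `subApp σ U`
is implicit: it lies entirely inside `σ X` for a single occurrence of a variable X. -/
def implicitAt (σ : 𝒳 → List Γ) (U : List (Γ ⊕ 𝒳)) (i len : ℕ) : Prop :=
  ∃ (j : ℕ) (X : 𝒳), U[j]? = some (Sum.inr X) ∧
    (subApp σ (U.take j)).length ≤ i ∧ i + len ≤ (subApp σ (U.take (j + 1))).length

/- ========= auxiliary development ========= -/

open Classical in
/-- Replace every occurrence of `ab` (scanning left to right) by `a`. -/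
noncomputable def repl (a b : Γ) : List Γ → List Γ
  | [] => []
  | [x] => [x]
  | x :: y :: t => if x = a ∧ y = b then a :: repl a b t else x :: repl a b (y :: t)

open Classical in
lemma repl_cons_cons (a b x y : Γ) (t : List Γ) :
    repl a b (x :: y :: t) =
      if x = a ∧ y = b then a :: repl a b t else x :: repl a b (y :: t) := by
  rw [repl]

lemma repl_ne_nil (a b : Γ) (w : List Γ) (hw : w ≠ []) : repl a b w ≠ [] := by
  match w with
  | [] => exact absurd rfl hw
  | [x] => simp [repl]
  | x :: y :: t => rw [repl_cons_cons]; split <;> simp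

lemma repl_length_le (a b : Γ) (w : List Γ) : (repl a b w).length ≤ w.length := by
  induction w using repl.induct a b with
  | case1 => simp [repl]
  | case2 x => simp [repl]
  | case3 x y t h ih =>
    rw [repl_cons_cons, if_pos h]
    simp only [List.length_cons]; omega
  | case4 x y t h ih =>
    rw [repl_cons_cons, if_neg h]
    simp only [List.length_cons] at ih ⊢; omega

lemma repl_length_lt (a b : Γ) (w : List Γ) (h : ∃ i, occursAt w [a, b] i) :
    (repl a b w).length < w.length := by
  induction w using repl.induct a b with
  | case1 => obtain ⟨i, hi, _⟩ := h; simp at hi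
  | case2 x => obtain ⟨i, hi, _⟩ := h; simp at hi
  | case3 x y t hxy ih =>
    rw [repl_cons_cons, if_pos hxy]
    have := repl_length_le a b t
    simp only [List.length_cons]; omega
  | case4 x y t hxy ih =>
    obtain ⟨i, hi1, hi2⟩ := h
    match i with
    | 0 =>
      simp at hi2
      exact absurd hi2 hxy
    | i + 1 =>
      rw [repl_cons_cons, if_neg hxy]
      have : (repl a b (y :: t)).length < (y :: t).length := by
        apply ih
        refine ⟨i, ?_, ?_⟩
        · simp at hi1 ⊢; omega
        · simpa using hi2
      simp only [List.length_cons] at this ⊢; omega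

lemma repl_append (a b : Γ) : ∀ (u v : List Γ),
    ¬(u.getLast? = some a ∧ v.head? = some b) →
    repl a b (u ++ v) = repl a b u ++ repl a b v := by
  intro u
  induction u using repl.induct a b with
  | case1 => intro v _; simp [repl]
  | case2 x =>
    intro v hc
    match v with
    | [] => simp [repl]
    | y :: t =>
      have hxy : ¬(x = a ∧ y = b) := by
        rintro ⟨rfl, rfl⟩; exact hc ⟨rfl, rfl⟩
      show repl a b (x :: y :: t) = repl a b [x] ++ repl a b (y :: t)
      rw [repl_cons_cons, if_neg hxy]
      simp [repl]
  | case3 x y t hxy ih =>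
    intro v hc
    show repl a b (x :: y :: (t ++ v)) = repl a b (x :: y :: t) ++ repl a b v
    rw [repl_cons_cons, if_pos hxy, repl_cons_cons, if_pos hxy]
    rw [ih v ?_]
    · simp
    · rintro ⟨h1, h2⟩
      apply hc
      refine ⟨?_, h2⟩
      have ht : t ≠ [] := by rintro rfl; simp at h1
      rw [List.getLast?_cons_cons]
      match t, ht with
      | z :: t', _ => rw [List.getLast?_cons_cons]; exact h1
  | case4 x y t hxy ih =>
    intro v hc
    show repl a b (x :: (y :: (t ++ v))) = repl a b (x :: y :: t) ++ repl a b v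
    rw [repl_cons_cons, if_neg hxy, repl_cons_cons, if_neg hxy]
    rw [show (y :: (t ++ v)) = (y :: t) ++ v from rfl, ih v ?_]
    · simp
    · rw [← List.getLast?_cons_cons (a := x) (b := y)]
      exact hc

lemma subApp_cons (σ : 𝒳 → List Γ) (x : Γ ⊕ 𝒳) (U : List (Γ ⊕ 𝒳)) :
    subApp σ (x :: U) = Sum.elim (fun c => [c]) σ x ++ subApp σ U := by
  simp [subApp]

lemma subApp_take_one (σ : 𝒳 → List Γ) (x : Γ ⊕ 𝒳) (U : List (Γ ⊕ 𝒳)) :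
    subApp σ ((x :: U).take 1) = Sum.elim (fun c => [c]) σ x := by
  simp [subApp]

lemma not_impl_head (σ : 𝒳 → List Γ) (x : Γ ⊕ 𝒳) (U : List (Γ ⊕ 𝒳)) (L : ℕ)
    (hL : (Sum.elim (fun c => [c]) σ x).length = L) (h1 : 1 ≤ L) :
    ¬ implicitAt σ (x :: U) (L - 1) 2 := by
  rintro ⟨j, X, hj, hlo, hhi⟩
  match j with
  | 0 =>
    rw [show (0 : ℕ) + 1 = 1 from rfl, subApp_take_one, hL] at hhi
    omega
  | j + 1 =>
    rw [List.take_succ_cons, subApp_cons] at hlo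
    simp only [List.length_append, hL] at hlo
    omega

lemma impl_shift (σ : 𝒳 → List Γ) (x : Γ ⊕ 𝒳) (U : List (Γ ⊕ 𝒳)) (L k : ℕ)
    (hL : (Sum.elim (fun c => [c]) σ x).length = L)
    (h : implicitAt σ (x :: U) (L + k) 2) : implicitAt σ U k 2 := by
  obtain ⟨j, X, hj, hlo, hhi⟩ := h
  match j with
  | 0 =>
    rw [show (0 : ℕ) + 1 = 1 from rfl, subApp_take_one, hL] at hhi
    omega
  | j + 1 =>
    refine ⟨j, X, by simpa using hj, ?_, ?_⟩
    · rw [List.take_succ_cons, subApp_cons] at hlo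
      simp only [List.length_append, hL] at hlo; omega
    · rw [List.take_succ_cons, subApp_cons] at hhi
      simp only [List.length_append, hL] at hhi; omega

lemma occ_shift (u v : List Γ) (p : List Γ) (k : ℕ) (h : occursAt v p k) :
    occursAt (u ++ v) p (u.length + k) := by
  obtain ⟨h1, h2⟩ := h
  constructor
  · simp; omega
  · rw [List.drop_append, List.drop_eq_nil_of_le (by omega), Nat.add_sub_cancel_left, List.nil_append]; exact h2

lemma subApp_repl (a b : Γ) (σ : 𝒳 → List Γ) (U : List (Γ ⊕ 𝒳))
    (himp : ∀ k, occursAt (subApp σ U) [a, b] k → implicitAt σ U k 2) :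
    subApp (fun X => repl a b (σ X)) U = repl a b (subApp σ U) := by
  induction U with
  | nil => simp [subApp, repl]
  | cons x U ih =>
    have hblk' : Sum.elim (fun c => [c]) (fun X => repl a b (σ X)) x
        = repl a b (Sum.elim (fun c => [c]) σ x) := by
      cases x <;> simp [repl]
    rw [subApp_cons, subApp_cons, hblk']
    have hcross : ¬((Sum.elim (fun c => [c]) σ x).getLast? = some a ∧
        (subApp σ U).head? = some b) := by
      rintro ⟨h1, h2⟩
      obtain ⟨u', hu⟩ := List.getLast?_eq_some_iff.mp h1
      obtain ⟨v', hv⟩ : ∃ v', subApp σ U = b :: v' := by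
        match hh : subApp σ U with
        | [] => rw [hh] at h2; simp at h2
        | c :: v' => rw [hh] at h2; simp at h2; exact ⟨v', by rw [h2]⟩
      have hocc0 : occursAt (subApp σ (x :: U)) [a, b] u'.length := by
        rw [subApp_cons, hu, hv]
        constructor
        · simp
        · rw [List.append_assoc, List.drop_left]
          simp
      have himpl := himp u'.length hocc0
      have hL : (Sum.elim (fun c => [c]) σ x).length = u'.length + 1 := by
        rw [hu]; simp
      exact not_impl_head σ x U (u'.length + 1) hL (by omega)
        (by simpa using himpl)
    rw [repl_append a b _ _ hcross]
    congr 1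
    apply ih
    intro k hk
    have hocc2 := himp ((Sum.elim (fun c => [c]) σ x).length + k)
      (by rw [subApp_cons]; exact occ_shift _ _ _ _ hk)
    exact impl_shift σ x U _ k rfl hocc2

/- ========= main theorem ========= -/

/-- For a length-minimal solution σ of U = V, any pair ab (a ≠ b) occurring in σ(U)
has an occurrence in σ(U) or σ(V) that is not implicit (i.e., explicit or crossing). -/
theorem stmt2 (U V : List (Γ ⊕ 𝒳)) (σ : 𝒳 → List Γ)
    (hsol : subApp σ U = subApp σ V)
    (hne : ∀ X : 𝒳, σ X ≠ [])
    (hmin : ∀ σ' : 𝒳 → List Γ, (∀ X : 𝒳, σ' X ≠ []) → subApp σ' U = subApp σ' V →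
      (subApp σ U).length ≤ (subApp σ' U).length)
    (a b : Γ) (hab : a ≠ b)
    (i : ℕ) (hocc : occursAt (subApp σ U) [a, b] i) :
    (∃ k, occursAt (subApp σ U) [a, b] k ∧ ¬ implicitAt σ U k 2) ∨
    (∃ k, occursAt (subApp σ V) [a, b] k ∧ ¬ implicitAt σ V k 2) := by
  by_contra hcon
  push_neg at hcon
  obtain ⟨h1, h2⟩ := hcon
  have hne' : ∀ X, (fun X => repl a b (σ X)) X ≠ [] :=
    fun X => repl_ne_nil a b _ (hne X)
  have hU : subApp (fun X => repl a b (σ X)) U = repl a b (subApp σ U) :=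
    subApp_repl a b σ U h1
  have hV : subApp (fun X => repl a b (σ X)) V = repl a b (subApp σ V) :=
    subApp_repl a b σ V h2
  have hsol' : subApp (fun X => repl a b (σ X)) U = subApp (fun X => repl a b (σ X)) V := by
    rw [hU, hV, hsol]
  have hge := hmin _ hne' hsol'
  have hlt : (repl a b (subApp σ U)).length < (subApp σ U).length :=
    repl_length_lt a b _ ⟨i, hocc⟩
  rw [hU] at hge
  omega
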